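/- GL_3(F) with F a field decomposes as the union of double cosets BwB where B is the upper triangular Borel and w ranges over the six 3×3 permutation matrices; moreover these double cosets are pairwise disjoint (Bruhat decomposition for GL_3). -/

import Mathlib

open Matrix

namespace BruhatGL3Aux

variable {F : Type*} [Field F]

lemma fin3_cases : ∀ j : Fin 3, j = 0 ∨ j = 1 ∨ j = 2 := by decide

open Classical in
noncomputable def piv (v : Fin 3 → F) : Fin 3 :=
  if v 0 ≠ 0 then 0 else if v 1 ≠ 0 then 1 else 2

lemma piv_nonzero {v : Fin 3 → F} (h : ¬(v 0 = 0 ∧ v 1 = 0 ∧ v 2 = 0)) :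
    v (piv v) ≠ 0 := by
  unfold piv
  split_ifs with h0 h1 <;> tauto

lemma piv_lt {v : Fin 3 → F} : ∀ j : Fin 3, j < piv v → v j = 0 := by
  unfold piv
  split_ifs with h0 h1 <;> intro j hj <;>
    rcases fin3_cases j with rfl | rfl | rfl <;>
      first
        | exact absurd hj (by decide)
        | simpa using h0
        | simpa using h1

lemma det_zero_lin (g : Matrix (Fin 3) (Fin 3) F) (s r : F)
    (h0 : g 0 0 = s * g 1 0 + r * g 2 0) (h1 : g 0 1 = s * g 1 1 + r * g 2 1)
    (h2 : g 0 2 = s * g 1 2 + r * g 2 2) : g.det = 0 := by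
  rw [Matrix.det_fin_three, h0, h1, h2]; ring

lemma det_zero_lin' (g : Matrix (Fin 3) (Fin 3) F) (c : F)
    (h0 : g 1 0 = c * g 2 0) (h1 : g 1 1 = c * g 2 1)
    (h2 : g 1 2 = c * g 2 2) : g.det = 0 := by
  rw [Matrix.det_fin_three, h0, h1, h2]; ring

lemma det_zero_row2 (g : Matrix (Fin 3) (Fin 3) F)
    (h0 : g 2 0 = 0) (h1 : g 2 1 = 0) (h2 : g 2 2 = 0) : g.det = 0 := by
  rw [Matrix.det_fin_three, h0, h1, h2]; ring

lemma perm_eq_of_le : ∀ σ τ : Equiv.Perm (Fin 3), (∀ k, σ k ≤ τ k) → σ = τ := by decide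

/-- Key uniqueness lemma. -/
lemma key (σ τ : Equiv.Perm (Fin 3)) (b b' c c' : Matrix (Fin 3) (Fin 3) F)
    (hb : IsUnit b.det) (hb' : IsUnit b'.det) (hc : IsUnit c.det) (hc' : IsUnit c'.det)
    (tb : ∀ i j : Fin 3, j < i → b i j = 0) (tb' : ∀ i j : Fin 3, j < i → b' i j = 0)
    (tc : ∀ i j : Fin 3, j < i → c i j = 0) (tc' : ∀ i j : Fin 3, j < i → c' i j = 0)
    (heq : b * σ.permMatrix F * b' = c * τ.permMatrix F * c') : σ = τ := by
  haveI := c.invertibleOfIsUnitDet hc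
  haveI := c'.invertibleOfIsUnitDet hc'
  have hbtri : b.BlockTriangular id := fun i j hij => tb i j hij
  have hb'tri : b'.BlockTriangular id := fun i j hij => tb' i j hij
  have hctri : c.BlockTriangular id := fun i j hij => tc i j hij
  have hc'tri : c'.BlockTriangular id := fun i j hij => tc' i j hij
  set U := c⁻¹ * b with hU
  set V := b' * c'⁻¹ with hV
  have hUtri : U.BlockTriangular id :=
    (Matrix.blockTriangular_inv_of_blockTriangular hctri).mul hbtri
  have hVtri : V.BlockTriangular id :=
    hb'tri.mul (Matrix.blockTriangular_inv_of_blockTriangular hc'tri)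
  have hUdet : IsUnit U.det := by
    rw [hU, Matrix.det_mul]
    exact (c.isUnit_nonsing_inv_det hc).mul hb
  haveI := U.invertibleOfIsUnitDet hUdet
  have h1 : U * (σ.permMatrix F * V) = τ.permMatrix F := by
    have h0 : b * σ.permMatrix F * b' * c'⁻¹ = c * τ.permMatrix F := by
      rw [heq, Matrix.mul_inv_cancel_right_of_invertible]
    have h2 : c⁻¹ * (b * σ.permMatrix F * b' * c'⁻¹) = τ.permMatrix F := by
      rw [h0, Matrix.inv_mul_cancel_left_of_invertible]
    calc U * (σ.permMatrix F * V)
        = c⁻¹ * (b * σ.permMatrix F * b' * c'⁻¹) := by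
          simp only [hU, hV, Matrix.mul_assoc]
      _ = τ.permMatrix F := h2
  have h3 : σ.permMatrix F * V = U⁻¹ * τ.permMatrix F := by
    rw [← h1, Matrix.inv_mul_cancel_left_of_invertible]
  have h4 : V.submatrix σ id = U⁻¹.submatrix id τ.symm := by
    have l1 : σ.permMatrix F * V = V.submatrix σ id :=
      PEquiv.toMatrix_toPEquiv_mul σ V
    have l2 : U⁻¹ * τ.permMatrix F = U⁻¹.submatrix id τ.symm :=
      PEquiv.mul_toMatrix_toPEquiv U⁻¹ τ
    rw [← l1, ← l2, h3]
  have hdiagV : ∀ k : Fin 3, V (σ k) (τ k) = U⁻¹ k k := by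
    intro k
    have := congrFun (congrFun h4 k) (τ k)
    simpa using this
  have hUitri : U⁻¹.BlockTriangular id :=
    Matrix.blockTriangular_inv_of_blockTriangular hUtri
  have hUidet : IsUnit U⁻¹.det := U.isUnit_nonsing_inv_det hUdet
  have hdne : ∀ k : Fin 3, U⁻¹ k k ≠ 0 := by
    have hprod : U⁻¹.det = ∏ i, U⁻¹ i i := Matrix.det_of_upperTriangular hUitri
    intro k hk
    have : U⁻¹.det = 0 := by
      rw [hprod]
      exact Finset.prod_eq_zero (Finset.mem_univ k) hk
    exact (isUnit_iff_ne_zero.mp hUidet) this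
  have hle : ∀ k, σ k ≤ τ k := by
    intro k
    by_contra hlt
    push_neg at hlt
    have : V (σ k) (τ k) = 0 := hVtri hlt
    exact hdne k (by rw [← hdiagV k, this])
  exact perm_eq_of_le σ τ hle

end BruhatGL3Aux

open BruhatGL3Aux

/-- Bruhat decomposition for `GL_3(F)`: every invertible 3×3 matrix `g` over a field `F`
lies in a double coset `B·w·B` for a unique permutation matrix `w`, where `B` is the
upper triangular Borel.  (Uniqueness of `w` expresses that the six double cosets cover
`GL_3(F)` and are pairwise disjoint.) -/
theorem bruhat_decomposition_GL3 (F : Type*) [Field F]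
    (g : Matrix (Fin 3) (Fin 3) F) (hg : IsUnit g.det) :
    ∃! σ : Equiv.Perm (Fin 3),
      ∃ b b' : Matrix (Fin 3) (Fin 3) F,
        IsUnit b.det ∧ IsUnit b'.det ∧
        (∀ i j : Fin 3, j < i → b i j = 0) ∧
        (∀ i j : Fin 3, j < i → b' i j = 0) ∧
        g = b * σ.permMatrix F * b' := by
  have hd : g.det ≠ 0 := isUnit_iff_ne_zero.mp hg
  have h2 : ¬(g 2 0 = 0 ∧ g 2 1 = 0 ∧ g 2 2 = 0) := by
    rintro ⟨a0, a1, a2⟩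
    exact hd (det_zero_row2 g a0 a1 a2)
  set j2 := piv (g 2) with hj2
  have p2 : g 2 j2 ≠ 0 := piv_nonzero h2
  set c1 := g 1 j2 / g 2 j2 with hc1
  set C1 : Fin 3 → F := fun j => g 1 j - c1 * g 2 j with hC1
  have hC1ne : ¬(C1 0 = 0 ∧ C1 1 = 0 ∧ C1 2 = 0) := by
    rintro ⟨a0, a1, a2⟩
    simp only [hC1] at a0 a1 a2
    exact hd (det_zero_lin' g c1 (by linear_combination a0) (by linear_combination a1)
      (by linear_combination a2))
  set j1 := piv C1 with hj1
  have p1 : C1 j1 ≠ 0 := piv_nonzero hC1ne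
  have hC1j2 : C1 j2 = 0 := by
    rw [hC1]
    field_simp [hc1]
    rw [hc1, div_mul_cancel₀ _ p2, sub_self]
  have ne12 : j1 ≠ j2 := fun h => p1 (h ▸ hC1j2)
  set r := g 0 j2 / g 2 j2 with hr
  set s := (g 0 j1 - r * g 2 j1) / C1 j1 with hs
  set C0 : Fin 3 → F := fun j => g 0 j - s * C1 j - r * g 2 j with hC0
  have hC0ne : ¬(C0 0 = 0 ∧ C0 1 = 0 ∧ C0 2 = 0) := by
    rintro ⟨a0, a1, a2⟩
    simp only [hC0, hC1] at a0 a1 a2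
    exact hd (det_zero_lin g s (r - s * c1) (by linear_combination a0)
      (by linear_combination a1) (by linear_combination a2))
  set j0 := piv C0 with hj0
  have p0 : C0 j0 ≠ 0 := piv_nonzero hC0ne
  have hC0j1 : C0 j1 = 0 := by
    rw [hC0]
    field_simp [hs]
    rw [hs, div_mul_cancel₀ _ p1]; ring
  have hC0j2 : C0 j2 = 0 := by
    rw [hC0]
    simp only [hC1j2]
    field_simp [hr]
    rw [hr, div_mul_cancel₀ _ p2]; ring
  have ne01 : j0 ≠ j1 := fun h => p0 (h ▸ hC0j1)
  have ne02 : j0 ≠ j2 := fun h => p0 (h ▸ hC0j2)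
  set f : Fin 3 → Fin 3 := ![j0, j1, j2] with hf
  have hinj : Function.Injective f := by
    intro a b hab
    rcases fin3_cases a with rfl | rfl | rfl <;> rcases fin3_cases b with rfl | rfl | rfl <;>
      first
        | rfl
        | (simp only [hf] at hab
           simp only [Matrix.cons_val_zero, Matrix.cons_val_one, Matrix.head_cons,
             Matrix.cons_val_two, Matrix.tail_cons] at hab
           first
             | exact absurd hab ne01 | exact absurd hab ne02 | exact absurd hab ne12
             | exact absurd hab.symm ne01 | exact absurd hab.symm ne02
             | exact absurd hab.symm ne12)
  set σ : Equiv.Perm (Fin 3) := Equiv.ofBijective f (Finite.injective_iff_bijective.mp hinj)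
    with hσ
  set C : Matrix (Fin 3) (Fin 3) F := Matrix.of ![C0, C1, g 2] with hC
  have hst : ∀ k j : Fin 3, j < f k → C k j = 0 := by
    intro k j hj
    rcases fin3_cases k with rfl | rfl | rfl <;>
      simp only [hf, hC, Matrix.cons_val_zero, Matrix.cons_val_one, Matrix.head_cons,
        Matrix.cons_val_two, Matrix.tail_cons, Matrix.of_apply] at hj ⊢ <;>
      exact piv_lt j hj
  have hdiag : ∀ k : Fin 3, C k (f k) ≠ 0 := by
    intro k
    rcases fin3_cases k with rfl | rfl | rfl <;>
      simp only [hf, hC, Matrix.cons_val_zero, Matrix.cons_val_one, Matrix.head_cons,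
        Matrix.cons_val_two, Matrix.tail_cons, Matrix.of_apply] <;>
      [exact p0; exact p1; exact p2]
  set b : Matrix (Fin 3) (Fin 3) F := !![1, s, r; 0, 1, c1; 0, 0, 1] with hb
  set b' : Matrix (Fin 3) (Fin 3) F := Matrix.of (fun i j => C (σ.symm i) j) with hb'
  have tb : ∀ i j : Fin 3, j < i → b i j = 0 := by
    intro i j hij
    rcases fin3_cases i with rfl | rfl | rfl <;> rcases fin3_cases j with rfl | rfl | rfl <;>
      first
        | exact absurd hij (by decide)
        | simp [hb, Matrix.vecHead, Matrix.vecTail]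
  have tb' : ∀ i j : Fin 3, j < i → b' i j = 0 := by
    intro i j hij
    have hfi : f (σ.symm i) = i := σ.apply_symm_apply i
    exact hst (σ.symm i) j (by rw [hfi]; exact hij)
  have hbdet : IsUnit b.det := by
    rw [hb, Matrix.det_fin_three]
    norm_num [Matrix.vecHead, Matrix.vecTail, Matrix.cons_val_two, Matrix.cons_val_one, Matrix.cons_val_zero]
  have hb'det : IsUnit b'.det := by
    have tri : b'.BlockTriangular id := fun i j hij => tb' i j hij
    rw [Matrix.det_of_upperTriangular tri, isUnit_iff_ne_zero, Finset.prod_ne_zero_iff]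
    intro i _
    have hfi : f (σ.symm i) = i := σ.apply_symm_apply i
    have hne := hdiag (σ.symm i)
    rw [hfi] at hne
    exact hne
  have hPb' : σ.permMatrix F * b' = C := by
    have hmul : σ.toPEquiv.toMatrix * b' = b'.submatrix σ id :=
      PEquiv.toMatrix_toPEquiv_mul σ b'
    have hpm : σ.permMatrix F = σ.toPEquiv.toMatrix := rfl
    rw [hpm, hmul]
    ext k j
    simp [hb', Matrix.submatrix_apply]
  have hbC : g = b * C := by
    ext i j
    rcases fin3_cases i with rfl | rfl | rfl <;>
      simp [hb, hC, Matrix.mul_apply, Fin.sum_univ_three, hC0, hC1] <;>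
      ring
  have hgfact : g = b * σ.permMatrix F * b' := by
    rw [Matrix.mul_assoc, hPb']
    exact hbC
  refine ⟨σ, ⟨b, b', hbdet, hb'det, tb, tb', hgfact⟩, ?_⟩
  rintro τ ⟨cm, cm', hcd, hcd', tcm, tcm', hfac⟩
  exact key τ σ cm cm' b b' hcd hcd' hbdet hb'det tcm tcm' tb tb' (hfac.symm.trans hgfact)
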